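/- Let m, k ∈ ℕ and let ξ₁, ..., ξ_k be finite measurable partitions of a probability space (X, μ), each with at most m cells. Let ξ = ⋁_{i=1}^k ξ_i be their common refinement and ρ = (1/k) Σ_{i=1}^k ρ_{ξ_i} the average of the corresponding cut semimetrics. Then for every ε ∈ (0, 1/2): H(ξ)/k ≤ ℍ_ε(X, μ, ρ)/k + 2ε log m − ε log ε − (1−ε) log(1−ε) + 1/k. -/

import Mathlib

open MeasureTheory Filter Pointwise

section EpsEntropy

variable {α : Type*} [MeasurableSpace α]

/-- `k` works for an `ε`-cover: `X = X₀ ∪ … ∪ X_k` with `μ X₀ < ε` and `diam_ρ X_i < ε` for `i ≥ 1`. -/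
def IsEntCover (μ : Measure α) (ρ : α → α → ℝ) (ε : ℝ) (k : ℕ) : Prop :=
  ∃ A : Fin (k + 1) → Set α, (∀ i, MeasurableSet (A i)) ∧ (⋃ i, A i) = Set.univ ∧
    μ (A 0) < ENNReal.ofReal ε ∧
    ∀ i : Fin (k + 1), i ≠ 0 → ∀ x ∈ A i, ∀ y ∈ A i, ρ x y < ε

/-- The ε-entropy `ℍ_ε(X, μ, ρ) = log₂ k` for the minimal admissible `k`. -/
noncomputable def epsEntropy (μ : Measure α) (ρ : α → α → ℝ) (ε : ℝ) : ℝ :=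
  Real.logb 2 ((sInf {k : ℕ | 0 < k ∧ IsEntCover μ ρ ε k} : ℕ) : ℝ)

/-- A semimetric is admissible iff all of its `ε`-entropies are finite. -/
def Admissible (μ : Measure α) (ρ : α → α → ℝ) : Prop :=
  ∀ ε : ℝ, 0 < ε → ∃ k : ℕ, 0 < k ∧ IsEntCover μ ρ ε k

end EpsEntropy

section AuxLemmas

/-- Subadditivity of negMulLog over a finite sum of nonnegatives. -/
lemma my_negMulLog_sum_le {ι : Type*} (s : Finset ι) (x : ι → ℝ) (hx : ∀ i ∈ s, 0 ≤ x i) :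
    Real.negMulLog (∑ i ∈ s, x i) ≤ ∑ i ∈ s, Real.negMulLog (x i) := by
  have hS : Real.negMulLog (∑ i ∈ s, x i) = ∑ i ∈ s, (-(x i) * Real.log (∑ j ∈ s, x j)) := by
    rw [Real.negMulLog, ← Finset.sum_neg_distrib, Finset.sum_mul]
  rw [hS]
  apply Finset.sum_le_sum
  intro i hi
  rcases eq_or_lt_of_le (hx i hi) with h0 | h0
  · simp [← h0, Real.negMulLog]
  · rw [Real.negMulLog, neg_mul, neg_mul, neg_le_neg_iff]
    exact mul_le_mul_of_nonneg_left
      (Real.log_le_log h0 (Finset.single_le_sum hx hi)) (le_of_lt h0)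

/-- Jensen-type: entropy of a (sub)probability vector on `s` is at most `w log |s| + negMulLog w`. -/
lemma my_sum_negMulLog_le {ι : Type*} (s : Finset ι) (x : ι → ℝ) (hx : ∀ i ∈ s, 0 ≤ x i) :
    ∑ i ∈ s, Real.negMulLog (x i) ≤
      (∑ i ∈ s, x i) * Real.log s.card + Real.negMulLog (∑ i ∈ s, x i) := by
  rcases s.eq_empty_or_nonempty with rfl | hne
  · simp
  have hN : (0:ℝ) < s.card := by exact_mod_cast Finset.card_pos.mpr hne
  have jensen := Real.concaveOn_negMulLog.le_map_sum (t := s) (w := fun _ => (s.card : ℝ)⁻¹)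
    (p := x) (fun i _ => by positivity)
    (by rw [Finset.sum_const, nsmul_eq_mul, mul_inv_cancel₀ (ne_of_gt hN)])
    (fun i hi => hx i hi)
  simp only [smul_eq_mul, ← Finset.mul_sum] at jensen
  have h2 : (s.card : ℝ) * ((s.card : ℝ)⁻¹ * ∑ i ∈ s, Real.negMulLog (x i)) ≤
      (s.card : ℝ) * Real.negMulLog ((s.card : ℝ)⁻¹ * ∑ i ∈ s, x i) :=
    mul_le_mul_of_nonneg_left jensen (le_of_lt hN)
  rw [← mul_assoc, mul_inv_cancel₀ (ne_of_gt hN), one_mul] at h2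
  refine h2.trans (le_of_eq ?_)
  rw [mul_comm ((s.card:ℝ)⁻¹), Real.negMulLog_mul]
  have : ((s.card:ℝ)⁻¹).negMulLog = (s.card:ℝ)⁻¹ * Real.log s.card := by
    rw [Real.negMulLog, Real.log_inv]; ring
  rw [this, Real.negMulLog]
  field_simp
  ring

lemma my_log_nat_mono {N M : ℕ} (h : N ≤ M) : Real.log N ≤ Real.log M := by
  rcases Nat.eq_zero_or_pos N with rfl | hN
  · simpa using Real.log_natCast_nonneg M
  · exact Real.log_le_log (by exact_mod_cast hN) (by exact_mod_cast h)

lemma my_log_nat_nonneg (N : ℕ) : 0 ≤ Real.log N := Real.log_natCast_nonneg N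


lemma my_chernoff (k s : ℕ) (ε : ℝ) (hε0 : 0 < ε) (hε1 : ε < 1/2) (hs : (s:ℝ) ≤ ε * k) :
    Real.log (∑ j ∈ Finset.range (s+1), (k.choose j : ℝ)) ≤
      (k:ℝ) * (-(ε * Real.log ε) - (1-ε) * Real.log (1-ε)) := by
  have h1ε : 0 < 1 - ε := by linarith
  have hεle : ε ≤ 1 - ε := by linarith
  have hsk : s ≤ k := by
    have : (s:ℝ) ≤ (k:ℝ) := by nlinarith [Nat.cast_nonneg (α := ℝ) k]
    exact_mod_cast this
  set M : ℝ := ε ^ (ε * k) * (1-ε) ^ ((1-ε) * (k:ℝ)) with hM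
  have hM0 : 0 < M := by positivity
  set B : ℝ := ∑ j ∈ Finset.range (s+1), (k.choose j : ℝ) with hB
  have hB1 : (1:ℝ) ≤ B := by
    rw [hB]
    calc (1:ℝ) = (k.choose 0 : ℝ) := by simp
    _ ≤ _ := Finset.single_le_sum (f := fun j => (k.choose j : ℝ))
        (fun j _ => by positivity) (by simp)
  have per : ∀ j ∈ Finset.range (s+1), M ≤ ε^j * (1-ε)^(k-j) := by
    intro j hj
    have hjs : j ≤ s := Nat.lt_succ_iff.mp (Finset.mem_range.mp hj)
    have hjk : j ≤ k := hjs.trans hsk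
    have hjε : (j:ℝ) ≤ ε * k := le_trans (by exact_mod_cast hjs) hs
    have hlog : Real.log ε ≤ Real.log (1-ε) := Real.log_le_log hε0 hεle
    have hcast : ((k - j : ℕ) : ℝ) = (k:ℝ) - j := by
      rw [Nat.cast_sub hjk]
    rw [hM, ← Real.rpow_natCast ε j, ← Real.rpow_natCast (1-ε) (k-j), hcast,
      Real.rpow_def_of_pos hε0, Real.rpow_def_of_pos h1ε,
      Real.rpow_def_of_pos hε0, Real.rpow_def_of_pos h1ε,
      ← Real.exp_add, ← Real.exp_add]
    apply Real.exp_le_exp.mpr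
    nlinarith [mul_le_mul_of_nonneg_left hlog (sub_nonneg.mpr hjε)]
  have key : B * M ≤ 1 := by
    rw [hB, Finset.sum_mul]
    calc ∑ j ∈ Finset.range (s+1), (k.choose j : ℝ) * M
        ≤ ∑ j ∈ Finset.range (s+1), ε^j * (1-ε)^(k-j) * (k.choose j : ℝ) := by
          apply Finset.sum_le_sum
          intro j hj
          rw [mul_comm]
          exact mul_le_mul_of_nonneg_right (per j hj) (by positivity)
      _ ≤ ∑ j ∈ Finset.range (k+1), ε^j * (1-ε)^(k-j) * (k.choose j : ℝ) := by
          apply Finset.sum_le_sum_of_subset_of_nonneg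
          · exact Finset.range_subset_range.mpr (by omega)
          · intro j _ _; positivity
      _ = 1 := by
          rw [← add_pow ε (1-ε) k]
          norm_num
  have hBM : B ≤ M⁻¹ := by
    have := mul_le_mul_of_nonneg_right key (le_of_lt (inv_pos.mpr hM0))
    rwa [mul_assoc, mul_inv_cancel₀ (ne_of_gt hM0), mul_one, one_mul] at this
  have hlogM : Real.log M = ε * k * Real.log ε + (1-ε) * k * Real.log (1-ε) := by
    rw [hM, Real.log_mul (by positivity) (by positivity), Real.log_rpow hε0,
      Real.log_rpow h1ε]
  calc Real.log B ≤ Real.log M⁻¹ := Real.log_le_log (by linarith) hBM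
    _ = -(Real.log M) := Real.log_inv M
    _ = (k:ℝ) * (-(ε * Real.log ε) - (1-ε) * Real.log (1-ε)) := by rw [hlogM]; ring


lemma my_ball_card (k m s : ℕ) (hm : 0 < m) (c₀ : Fin k → Fin m) :
    (Finset.univ.filter (fun c : Fin k → Fin m =>
        (Finset.univ.filter (fun j => c j ≠ c₀ j)).card ≤ s)).card
      ≤ (∑ j ∈ Finset.range (s+1), k.choose j) * m ^ s := by
  classical
  set P : Finset (Finset (Fin k)) := Finset.univ.filter (fun S => S.card ≤ s) with hP
  set E : Finset (Fin k) → Finset (Fin k → Fin m) :=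
    fun S => Finset.univ.filter (fun c => ∀ j ∉ S, c j = c₀ j) with hE
  have hsub : (Finset.univ.filter (fun c : Fin k → Fin m =>
      (Finset.univ.filter (fun j => c j ≠ c₀ j)).card ≤ s)) ⊆ P.biUnion E := by
    intro c hc
    rw [Finset.mem_filter] at hc
    rw [Finset.mem_biUnion]
    refine ⟨Finset.univ.filter (fun j => c j ≠ c₀ j), ?_, ?_⟩
    · rw [hP, Finset.mem_filter]; exact ⟨Finset.mem_univ _, hc.2⟩
    · rw [hE, Finset.mem_filter]
      refine ⟨Finset.mem_univ _, fun j hj => ?_⟩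
      rw [Finset.mem_filter] at hj
      push_neg at hj
      exact hj (Finset.mem_univ _)
  have hES : ∀ S : Finset (Fin k), (E S).card ≤ m ^ S.card := by
    intro S
    have : (E S).card ≤ (Finset.univ : Finset ({x // x ∈ S} → Fin m)).card := by
      apply Finset.card_le_card_of_injOn
        (fun (c : Fin k → Fin m) (j : {x // x ∈ S}) => c j.1)
        (fun c _ => Finset.mem_univ _)
      intro c₁ h₁ c₂ h₂ heq
      rw [hE, Finset.coe_filter] at h₁ h₂
      funext j
      by_cases hj : j ∈ S
      · exact congrFun heq ⟨j, hj⟩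
      · rw [h₁.2 j hj, h₂.2 j hj]
    rwa [Finset.card_univ, Fintype.card_fun, Fintype.card_fin, Fintype.card_coe] at this
  calc _ ≤ (P.biUnion E).card := Finset.card_le_card hsub
    _ ≤ ∑ S ∈ P, (E S).card := Finset.card_biUnion_le
    _ ≤ ∑ S ∈ P, m ^ s := Finset.sum_le_sum (fun S hS => by
        refine (hES S).trans (Nat.pow_le_pow_right hm ?_)
        rw [hP, Finset.mem_filter] at hS; exact hS.2)
    _ = P.card * m ^ s := by rw [Finset.sum_const, smul_eq_mul]
    _ ≤ (∑ j ∈ Finset.range (s+1), k.choose j) * m ^ s := by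
        apply Nat.mul_le_mul_right
        have hPsub : P ⊆ (Finset.range (s+1)).biUnion
            (fun j => Finset.powersetCard j Finset.univ) := by
          intro S hS
          rw [hP, Finset.mem_filter] at hS
          rw [Finset.mem_biUnion]
          exact ⟨S.card, Finset.mem_range.mpr (Nat.lt_succ_of_le hS.2),
            Finset.mem_powersetCard.mpr ⟨Finset.subset_univ _, rfl⟩⟩
        calc P.card ≤ _ := Finset.card_le_card hPsub
          _ ≤ ∑ j ∈ Finset.range (s+1), (Finset.powersetCard j (Finset.univ : Finset (Fin k))).card :=
            Finset.card_biUnion_le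
          _ = ∑ j ∈ Finset.range (s+1), k.choose j := by
            apply Finset.sum_congr rfl
            intro j _
            rw [Finset.card_powersetCard, Finset.card_univ, Fintype.card_fin]

end AuxLemmas

/-- Lemma 1(2): for finite partitions `ξ₁, …, ξ_k`, each with at most `m` cells, with common
refinement `ξ` and average cut semimetric `ρ`, for `ε ∈ (0, 1/2)`:
`H(ξ)/k ≤ ℍ_ε(ρ)/k + 2ε log m − ε log ε − (1−ε) log(1−ε) + 1/k`. -/
theorem shannon_le_epsEntropy_avg {X : Type*} [MeasurableSpace X]
    (μ : Measure X) [IsProbabilityMeasure μ]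
    (m k : ℕ) (hm : 0 < m) (hk : 0 < k)
    (P : Fin k → X → Fin m) (hP : ∀ i, Measurable (P i))
    (ρ : X → X → ℝ)
    (hρ : ρ = fun x y => (k : ℝ)⁻¹ * ∑ i, (if P i x = P i y then (0 : ℝ) else 1))
    (H : ℝ) (hH : H = -∫ x, Real.logb 2 (μ {y | ∀ i, P i y = P i x}).toReal ∂μ)
    (ε : ℝ) (hε0 : 0 < ε) (hε1 : ε < 1 / 2) :
    H / k ≤ epsEntropy μ ρ ε / k + 2 * ε * Real.logb 2 m
      - ε * Real.logb 2 ε - (1 - ε) * Real.logb 2 (1 - ε) + 1 / k := by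
  classical
  have hL : (0:ℝ) < Real.log 2 := Real.log_pos (by norm_num)
  have hk0 : (0:ℝ) < (k:ℝ) := Nat.cast_pos.mpr hk
  set Q : X → (Fin k → Fin m) := fun x i => P i x with hQdef
  have hQ : Measurable Q := measurable_pi_lambda _ hP
  set p : (Fin k → Fin m) → ℝ := fun c => (μ (Q ⁻¹' {c})).toReal with hpdef
  -- Step 1 : H as a finite sum
  have hstep1 : H = (∑ c, Real.negMulLog (p c)) / Real.log 2 := by
    have hsing : ∀ c : Fin k → Fin m, MeasurableSet {c} := fun c => measurableSet_singleton c
    have hset : ∀ x, {y | ∀ i, P i y = P i x} = Q ⁻¹' {Q x} := by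
      intro x
      ext y
      simp only [Set.mem_setOf_eq, Set.mem_preimage, Set.mem_singleton_iff, funext_iff]
      exact Iff.rfl
    have h1 : ∫ x, Real.logb 2 (μ {y | ∀ i, P i y = P i x}).toReal ∂μ
        = ∫ x, Real.logb 2 (p (Q x)) ∂μ := by
      refine integral_congr_ae (Filter.Eventually.of_forall fun x => ?_)
      simp only [hset]
      rfl
    have h2 : ∫ x, Real.logb 2 (p (Q x)) ∂μ = ∫ c, Real.logb 2 (p c) ∂(μ.map Q) :=
      (integral_map (f := fun c => Real.logb 2 (p c)) hQ.aemeasurable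
        ((measurable_of_countable _).aestronglyMeasurable)).symm
    have h3 : ∫ c, Real.logb 2 (p c) ∂(μ.map Q) = ∑ c, p c * Real.logb 2 (p c) := by
      rw [integral_fintype Integrable.of_finite]
      apply Finset.sum_congr rfl
      intro c _
      rw [smul_eq_mul, measureReal_def, Measure.map_apply hQ (hsing c)]
    rw [hH, h1, h2, h3, ← Finset.sum_neg_distrib, Finset.sum_div]
    apply Finset.sum_congr rfl
    intro c _
    rw [Real.negMulLog, Real.logb]
    field_simp
  -- Step 2 : a cover exists
  have hne : {k' : ℕ | 0 < k' ∧ IsEntCover μ ρ ε k'}.Nonempty := by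
    set N := Fintype.card (Fin k → Fin m) with hN
    have hN0 : 0 < N := by
      rw [hN, Fintype.card_fun, Fintype.card_fin, Fintype.card_fin]
      exact pow_pos hm k
    set e := Fintype.equivFin (Fin k → Fin m) with he
    refine ⟨N, hN0, Fin.cases ∅ (fun j => Q ⁻¹' {e.symm j}), ?_, ?_, ?_, ?_⟩
    · intro i
      cases i using Fin.cases with
      | zero => simp
      | succ j =>
        simp only [Fin.cases_succ]
        exact hQ (measurableSet_singleton _)
    · ext x
      simp only [Set.mem_univ, iff_true]
      refine Set.mem_iUnion.mpr ⟨Fin.succ (e (Q x)), ?_⟩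
      simp [Fin.cases_succ]
    · simp only [Fin.cases_zero]
      rw [measure_empty]
      exact ENNReal.ofReal_pos.mpr hε0
    · intro i hi x hx y hy
      cases i using Fin.cases with
      | zero => exact absurd rfl hi
      | succ j =>
        simp only [Fin.cases_succ, Set.mem_preimage, Set.mem_singleton_iff] at hx hy
        have hxy : Q x = Q y := hx.trans hy.symm
        rw [hρ]
        simp only
        have hz : ∀ i : Fin k, (if P i x = P i y then (0:ℝ) else 1) = 0 := by
          intro i
          rw [if_pos (congrFun hxy i)]
        rw [Finset.sum_congr rfl (fun i _ => hz i), Finset.sum_const_zero, mul_zero]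
        exact hε0
  set n := sInf {k' : ℕ | 0 < k' ∧ IsEntCover μ ρ ε k'} with hndef
  have hnmem := Nat.sInf_mem hne
  obtain ⟨hn0, A, hAmeas, hAcov, hA0, hdiam⟩ := hnmem
  have heps : epsEntropy μ ρ ε = Real.logb 2 (n : ℝ) := rfl
  -- Step 3 : disjointify the cover
  set B : Fin (n+1) → Set X := fun i => A i \ ⋃ j, ⋃ (_ : j < i), A j with hBdef
  have hBmeas : ∀ i, MeasurableSet (B i) := fun i =>
    (hAmeas i).diff (MeasurableSet.iUnion fun j => MeasurableSet.iUnion fun _ => hAmeas j)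
  have hBsub : ∀ i, B i ⊆ A i := fun i => Set.diff_subset
  have hBdisj : Pairwise (Function.onFun Disjoint B) := by
    have key : ∀ i j : Fin (n+1), i < j → Disjoint (B i) (B j) := by
      intro i j hij
      rw [Set.disjoint_left]
      intro x hxi hxj
      exact hxj.2 (Set.mem_iUnion.mpr ⟨i, Set.mem_iUnion.mpr ⟨hij, hxi.1⟩⟩)
    exact fun i j hij => (lt_or_gt_of_ne hij).elim (key i j) (fun h => (key j i h).symm)
  have hBcov : ⋃ i, B i = Set.univ := by
    ext x
    simp only [Set.mem_univ, iff_true]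
    have hx : x ∈ ⋃ i, A i := hAcov ▸ Set.mem_univ x
    obtain ⟨i1, hi1⟩ := Set.mem_iUnion.mp hx
    set Sx := Finset.univ.filter (fun i => x ∈ A i) with hSx
    have hSxne : Sx.Nonempty := ⟨i1, Finset.mem_filter.mpr ⟨Finset.mem_univ _, hi1⟩⟩
    refine Set.mem_iUnion.mpr ⟨Sx.min' hSxne, ?_, ?_⟩
    · exact (Finset.mem_filter.mp (Sx.min'_mem hSxne)).2
    · intro hmem
      obtain ⟨j, hj⟩ := Set.mem_iUnion.mp hmem
      obtain ⟨hjlt, hjA⟩ := Set.mem_iUnion.mp hj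
      exact absurd (Sx.min'_le j (Finset.mem_filter.mpr ⟨Finset.mem_univ _, hjA⟩))
        (not_le.mpr hjlt)
  set a : Fin (n+1) → (Fin k → Fin m) → ℝ := fun i c => (μ (B i ∩ Q ⁻¹' {c})).toReal with hadef
  set w : Fin (n+1) → ℝ := fun i => (μ (B i)).toReal with hwdef
  have ha_nn : ∀ i c, 0 ≤ a i c := fun i c => ENNReal.toReal_nonneg
  have hw_nn : ∀ i, 0 ≤ w i := fun i => ENNReal.toReal_nonneg
  have hmeasadd : ∀ (V : Set X), MeasurableSet V →
      (μ V).toReal = ∑ i, (μ (B i ∩ V)).toReal := by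
    intro V hV
    have h1 : μ V = ∑' i, μ (B i ∩ V) := by
      rw [← measure_iUnion (fun i j hij => (hBdisj hij).mono Set.inter_subset_left Set.inter_subset_left)
        (fun i => (hBmeas i).inter hV)]
      · congr 1
        rw [← Set.iUnion_inter, hBcov, Set.univ_inter]
    rw [h1, tsum_fintype]
    exact ENNReal.toReal_sum (fun i _ => measure_ne_top μ _)
  have hpc : ∀ c, p c = ∑ i, a i c := fun c =>
    hmeasadd (Q ⁻¹' {c}) (hQ (measurableSet_singleton c))
  have hw1 : ∑ i, w i = 1 := by
    have := hmeasadd Set.univ MeasurableSet.univ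
    simp only [measure_univ, ENNReal.toReal_one, Set.inter_univ] at this
    exact this.symm
  have hwa : ∀ i, w i = ∑ c, a i c := by
    intro i
    have hdisj : Pairwise (Function.onFun Disjoint (fun c => B i ∩ Q ⁻¹' {c})) := by
      intro c c' hcc
      rw [Function.onFun, Set.disjoint_left]
      rintro x ⟨-, hx1⟩ ⟨-, hx2⟩
      exact hcc (hx1.symm.trans hx2)
    have h1 : μ (B i) = ∑' c, μ (B i ∩ Q ⁻¹' {c}) := by
      rw [← measure_iUnion hdisj (fun c => (hBmeas i).inter (hQ (measurableSet_singleton c)))]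
      congr 1
      rw [← Set.inter_iUnion]
      have : (⋃ c, Q ⁻¹' {c}) = Set.univ := by
        ext x; simp only [Set.mem_univ, iff_true, Set.mem_iUnion, Set.mem_preimage,
          Set.mem_singleton_iff]
        exact ⟨Q x, rfl⟩
      rw [this, Set.inter_univ]
    show (μ (B i)).toReal = _
    rw [h1, tsum_fintype]
    exact ENNReal.toReal_sum (fun c _ => measure_ne_top μ _)
  -- supports
  set T : Fin (n+1) → Finset (Fin k → Fin m) :=
    fun i => Finset.univ.filter (fun c => 0 < a i c) with hTdef
  have hTsum : ∀ i, ∑ c, Real.negMulLog (a i c) ≤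
      w i * Real.log ((T i).card) + Real.negMulLog (w i) := by
    intro i
    have hzero : ∀ c ∈ Finset.univ, c ∉ T i → a i c = 0 := by
      intro c _ hc
      rw [hTdef, Finset.mem_filter, not_and] at hc
      exact le_antisymm (not_lt.mp (hc (Finset.mem_univ c))) (ha_nn i c)
    have h1 : ∑ c, Real.negMulLog (a i c) = ∑ c ∈ T i, Real.negMulLog (a i c) := by
      symm
      apply Finset.sum_subset (Finset.subset_univ _)
      intro c hc hc2
      rw [hzero c hc hc2, Real.negMulLog_zero]
    have h2 : ∑ c ∈ T i, a i c = w i := by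
      rw [hwa i]
      apply Finset.sum_subset (Finset.subset_univ _)
      intro c hc hc2
      exact hzero c hc hc2
    rw [h1, ← h2]
    exact my_sum_negMulLog_le (T i) _ (fun c _ => ha_nn i c)
  -- subadditivity
  have hsubadd : ∑ c, Real.negMulLog (p c) ≤ ∑ i, ∑ c, Real.negMulLog (a i c) := by
    calc ∑ c, Real.negMulLog (p c) ≤ ∑ c, ∑ i, Real.negMulLog (a i c) := by
          apply Finset.sum_le_sum
          intro c _
          rw [hpc c]
          exact my_negMulLog_sum_le Finset.univ _ (fun i _ => ha_nn i c)
      _ = ∑ i, ∑ c, Real.negMulLog (a i c) := Finset.sum_comm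
  -- cardinality bounds
  set s := ⌊ε * k⌋₊ with hsdef
  have hsR : (s:ℝ) ≤ ε * k := Nat.floor_le (by positivity)
  have hT0 : (T 0).card ≤ m ^ k := by
    calc (T 0).card ≤ Fintype.card (Fin k → Fin m) := Finset.card_le_univ _
      _ = m ^ k := by rw [Fintype.card_fun, Fintype.card_fin, Fintype.card_fin]
  have hTi : ∀ i, i ≠ 0 → (T i).card ≤ (∑ j ∈ Finset.range (s+1), k.choose j) * m ^ s := by
    intro i hi
    rcases (T i).eq_empty_or_nonempty with hTe | ⟨c₀, hc₀⟩
    · rw [hTe]; simp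
    · have hpt : ∀ c ∈ T i, ∃ x, x ∈ B i ∧ Q x = c := by
        intro c hc
        rw [hTdef, Finset.mem_filter] at hc
        have hposμ : μ (B i ∩ Q ⁻¹' {c}) ≠ 0 := by
          intro h0
          rw [hadef] at hc
          simp only [h0, ENNReal.toReal_zero, lt_self_iff_false] at hc
          exact hc.2
        obtain ⟨x, hx1, hx2⟩ := nonempty_of_measure_ne_zero hposμ
        exact ⟨x, hx1, hx2⟩
      obtain ⟨x₀, hx₀B, hx₀Q⟩ := hpt c₀ hc₀
      have hham : ∀ c ∈ T i, (Finset.univ.filter (fun j => c j ≠ c₀ j)).card ≤ s := by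
        intro c hc
        obtain ⟨x, hxB, hxQ⟩ := hpt c hc
        have hρxy : ρ x x₀ < ε := hdiam i hi x (hBsub i hxB) x₀ (hBsub i hx₀B)
        rw [hρ] at hρxy
        simp only at hρxy
        have hPeq : ∀ j, (if P j x = P j x₀ then (0:ℝ) else 1)
            = if c j ≠ c₀ j then 1 else 0 := by
          intro j
          have h1 : P j x = c j := congrFun hxQ j
          have h2 : P j x₀ = c₀ j := congrFun hx₀Q j
          rw [h1, h2]
          by_cases h : c j = c₀ j <;> simp [h]
        have hsum : ∑ j, (if P j x = P j x₀ then (0:ℝ) else 1)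
            = ((Finset.univ.filter (fun j => c j ≠ c₀ j)).card : ℝ) := by
          rw [Finset.sum_congr rfl (fun j _ => hPeq j), Finset.sum_boole]
        rw [hsum] at hρxy
        have hd : ((Finset.univ.filter (fun j => c j ≠ c₀ j)).card : ℝ) < ε * k := by
          have := (inv_mul_lt_iff₀ hk0).mp hρxy
          linarith [this]
        exact Nat.le_floor hd.le
      have hsubball : T i ⊆ Finset.univ.filter (fun c : Fin k → Fin m =>
          (Finset.univ.filter (fun j => c j ≠ c₀ j)).card ≤ s) := fun c hc =>
        Finset.mem_filter.mpr ⟨Finset.mem_univ _, hham c hc⟩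
      exact (Finset.card_le_card hsubball).trans (my_ball_card k m s hm c₀)
  -- log bounds
  have hlogm : (0:ℝ) ≤ Real.log m := Real.log_natCast_nonneg m
  have hEnt : (0:ℝ) ≤ -(ε * Real.log ε) - (1-ε) * Real.log (1-ε) := by
    have h1 : Real.log ε ≤ 0 := Real.log_nonpos hε0.le (by linarith)
    have h2 : Real.log (1-ε) ≤ 0 := Real.log_nonpos (by linarith) (by linarith)
    nlinarith
  have hlogT0 : Real.log ((T 0).card) ≤ (k:ℝ) * Real.log m := by
    refine (my_log_nat_mono hT0).trans ?_
    rw [Nat.cast_pow, Real.log_pow]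
  have hC : ∀ i, i ≠ 0 → Real.log ((T i).card) ≤
      (k:ℝ) * (-(ε * Real.log ε) - (1-ε) * Real.log (1-ε)) + ε * k * Real.log m := by
    intro i hi
    refine (my_log_nat_mono (hTi i hi)).trans ?_
    have hB1 : (1:ℝ) ≤ ∑ j ∈ Finset.range (s+1), (k.choose j : ℝ) := by
      calc (1:ℝ) = (k.choose 0 : ℝ) := by simp
        _ ≤ _ := Finset.single_le_sum (f := fun j => (k.choose j : ℝ))
            (fun j _ => by positivity) (by simp)
    rw [Nat.cast_mul, Nat.cast_pow]
    push_cast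
    rw [Real.log_mul (by linarith) (by positivity), Real.log_pow]
    have h1 := my_chernoff k s ε hε0 hε1 hsR
    have h2 : (s:ℝ) * Real.log m ≤ ε * k * Real.log m :=
      mul_le_mul_of_nonneg_right hsR hlogm
    linarith
  -- assemble
  have hw0 : w 0 < ε := by
    have h1 : w 0 ≤ (μ (A 0)).toReal :=
      ENNReal.toReal_mono (measure_ne_top μ _) (measure_mono (hBsub 0))
    exact lt_of_le_of_lt h1 (ENNReal.toReal_lt_of_lt_ofReal hA0)
  have hwsum_le : ∑ i ∈ Finset.univ.erase 0, w i ≤ 1 := by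
    rw [← hw1]
    exact Finset.sum_le_sum_of_subset_of_nonneg (Finset.erase_subset _ _)
      (fun i _ _ => hw_nn i)
  set C : ℝ := (k:ℝ) * (-(ε * Real.log ε) - (1-ε) * Real.log (1-ε)) + ε * k * Real.log m
    with hCdef
  have hC0 : 0 ≤ C := by
    have : 0 ≤ ε * k * Real.log m := by positivity
    nlinarith
  have hterm1 : ∑ i, w i * Real.log ((T i).card) ≤ ε * ((k:ℝ) * Real.log m) + C := by
    rw [← Finset.add_sum_erase _ _ (Finset.mem_univ (0 : Fin (n+1)))]
    have hA1 : w 0 * Real.log ((T 0).card) ≤ ε * ((k:ℝ) * Real.log m) :=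
      mul_le_mul hw0.le hlogT0 (my_log_nat_nonneg _) hε0.le
    have hA2 : ∑ i ∈ Finset.univ.erase 0, w i * Real.log ((T i).card) ≤ C := by
      calc ∑ i ∈ Finset.univ.erase 0, w i * Real.log ((T i).card)
          ≤ ∑ i ∈ Finset.univ.erase 0, w i * C := by
            apply Finset.sum_le_sum
            intro i hi
            exact mul_le_mul_of_nonneg_left (hC i (Finset.ne_of_mem_erase hi)) (hw_nn i)
        _ = (∑ i ∈ Finset.univ.erase 0, w i) * C := by rw [Finset.sum_mul]
        _ ≤ 1 * C := mul_le_mul_of_nonneg_right hwsum_le hC0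
        _ = C := one_mul C
    linarith
  have hterm2 : ∑ i, Real.negMulLog (w i) ≤ Real.log n + Real.log 2 := by
    have h1 := my_sum_negMulLog_le Finset.univ w (fun i _ => hw_nn i)
    rw [hw1, Finset.card_univ, Fintype.card_fin, one_mul, Real.negMulLog_one, add_zero] at h1
    refine h1.trans ?_
    have h2 : Real.log ((n:ℝ)+1) ≤ Real.log (2*(n:ℝ)) := by
      have := my_log_nat_mono (show n+1 ≤ 2*n by omega)
      push_cast at this
      exact this
    have h3 : Real.log (2*(n:ℝ)) = Real.log 2 + Real.log (n:ℝ) :=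
      Real.log_mul two_ne_zero (by exact_mod_cast hn0.ne')
    push_cast
    linarith
  have hmaster : ∑ c, Real.negMulLog (p c) ≤
      Real.log n + Real.log 2 + 2 * ε * k * Real.log m
        + (k:ℝ) * (-(ε * Real.log ε) - (1-ε) * Real.log (1-ε)) := by
    calc ∑ c, Real.negMulLog (p c) ≤ ∑ i, ∑ c, Real.negMulLog (a i c) := hsubadd
      _ ≤ ∑ i, (w i * Real.log ((T i).card) + Real.negMulLog (w i)) :=
          Finset.sum_le_sum (fun i _ => hTsum i)
      _ = ∑ i, w i * Real.log ((T i).card) + ∑ i, Real.negMulLog (w i) :=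
          Finset.sum_add_distrib
      _ ≤ (ε * ((k:ℝ) * Real.log m) + C) + (Real.log n + Real.log 2) :=
          add_le_add hterm1 hterm2
      _ = Real.log n + Real.log 2 + 2 * ε * k * Real.log m
            + (k:ℝ) * (-(ε * Real.log ε) - (1-ε) * Real.log (1-ε)) := by
          rw [hCdef]; ring
  -- final arithmetic
  have hrhs : epsEntropy μ ρ ε / k + 2 * ε * Real.logb 2 m
      - ε * Real.logb 2 ε - (1 - ε) * Real.logb 2 (1 - ε) + 1 / k
      = (Real.log n + Real.log 2 + 2 * ε * k * Real.log m
        + (k:ℝ) * (-(ε * Real.log ε) - (1-ε) * Real.log (1-ε))) / (Real.log 2 * k) := by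
    rw [heps]
    simp only [Real.logb]
    field_simp
    ring
  rw [hstep1, hrhs, div_div]
  exact (div_le_div_iff_of_pos_right (mul_pos hL hk0)).mpr hmaster
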